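/- Let S_1, S_2, ... be i.i.d. random variables with P(S_n = 0) = P(S_n = 1) = 1/2, and let R_n denote the rank variables R_n = Σ_{i=1}^n 1[S_i ≤ S_n]. Then the conditional entropy satisfies H(R_{k+1}, R_{k+2} | S_1, ..., S_k) = 2·(1 − (3/2^{k+3})·log₂ 3), and hence H(R_{k+1}, R_{k+2} | S_1^k) → 2 = H(S_{k+1}, S_{k+2} | S_1^k) as k → ∞. -/

import Mathlib

open MeasureTheory ProbabilityTheory Filter Real
open scoped ENNReal

/-- Shannon entropy (base 2) of a random variable. -/
noncomputable def shEntropy {Ω : Type*} [MeasurableSpace Ω] {A : Type*}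
    (μ : Measure Ω) (X : Ω → A) : ℝ :=
  -∑' a : A, (μ (X ⁻¹' {a})).toReal * Real.logb 2 (μ (X ⁻¹' {a})).toReal

/-- Conditional Shannon entropy `H(Y|Z) = Σ_z P(Z=z) H(Y | Z=z)`. -/
noncomputable def condShEntropy {Ω : Type*} [MeasurableSpace Ω] {A B : Type*}
    (μ : Measure Ω) (Y : Ω → A) (Z : Ω → B) : ℝ :=
  ∑' b : B, (μ (Z ⁻¹' {b})).toReal * shEntropy (μ[|Z ⁻¹' {b}]) Y

open Classical in
/-- Rank variable `R_n(ω) = #{i : 1 ≤ i ≤ n, S_i(ω) ≤ S_n(ω)}`. -/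
noncomputable def rankVar {Ω A : Type*} [LinearOrder A] (S : ℕ → Ω → A) (n : ℕ) (ω : Ω) : ℕ :=
  ((Finset.Icc 1 n).filter (fun i => S i ω ≤ S n ω)).card


lemma g_inj (k m : ℕ) (hmlt : m < k) : Function.Injective
    (fun t : Fin 2 × Fin 2 => ((if t.1 = 1 then k + 1 else m + 1),
      (if t.2 = 1 then k + 2 else if t.1 = 1 then m + 1 else m + 2))) := by
  rintro ⟨a, a'⟩ ⟨c, c'⟩ h
  simp only [Prod.mk.injEq] at h ⊢
  fin_cases a <;> fin_cases a' <;> fin_cases c <;> fin_cases c' <;>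
    first
      | exact ⟨by trivial, by trivial⟩
      | (simp [Fin.ext_iff] at h ⊢ <;> omega)

lemma g_zero_mem (k m : ℕ) (hmke : m = k) (t : Fin 2 × Fin 2) :
    ((if t.1 = 1 then k + 1 else m + 1),
      (if t.2 = 1 then k + 2 else if t.1 = 1 then m + 1 else m + 2)) = (k+1, k+2)
    ∨ ((if t.1 = 1 then k + 1 else m + 1),
      (if t.2 = 1 then k + 2 else if t.1 = 1 then m + 1 else m + 2)) = (k+1, k+1) := by
  subst hmke
  rcases t with ⟨a, a'⟩
  fin_cases a <;> fin_cases a' <;> simp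

lemma g_zero_A (k m : ℕ) (hmke : m = k) (a a' : Fin 2) :
    ((if a = 1 then k + 1 else m + 1),
      (if a' = 1 then k + 2 else if a = 1 then m + 1 else m + 2)) = (k+1, k+2)
    ↔ ((a, a') = (0, 0) ∨ (a, a') = (0, 1) ∨ (a, a') = (1, 1)) := by
  subst hmke
  fin_cases a <;> fin_cases a' <;> simp [Prod.ext_iff]

lemma g_zero_B (k m : ℕ) (hmke : m = k) (a a' : Fin 2) :
    ((if a = 1 then k + 1 else m + 1),
      (if a' = 1 then k + 2 else if a = 1 then m + 1 else m + 2)) = (k+1, k+1)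
    ↔ (a, a') = (1, 0) := by
  subst hmke
  fin_cases a <;> fin_cases a' <;> simp [Prod.ext_iff]

section Aux

variable {Ω : Type*} [MeasurableSpace Ω] {μ : Measure Ω} [IsProbabilityMeasure μ]
  {S : ℕ → Ω → Fin 2}

lemma aux_prod (hindep : iIndepFun S μ)
    (hfair : ∀ n, μ (S n ⁻¹' {0}) = 1/2 ∧ μ (S n ⁻¹' {1}) = 1/2)
    (t : Finset ℕ) (f : ℕ → Fin 2) :
    μ (⋂ n ∈ t, S n ⁻¹' {f n}) = 2⁻¹ ^ t.card := by
  have fair' : ∀ n (v : Fin 2), μ (S n ⁻¹' {v}) = 2⁻¹ := by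
    intro n v
    fin_cases v
    · simpa [one_div] using (hfair n).1
    · simpa [one_div] using (hfair n).2
  rw [hindep.measure_inter_preimage_eq_mul t (fun i _ => measurableSet_singleton (f i))]
  simp [fair']

lemma core (hmeas : ∀ n, Measurable (S n))
    (hindep : iIndepFun S μ)
    (hfair : ∀ n, μ (S n ⁻¹' {0}) = 1/2 ∧ μ (S n ⁻¹' {1}) = 1/2)
    (k : ℕ) (b : Fin k → Fin 2) :
    μ ((fun ω => fun i : Fin k => S (i.1 + 1) ω) ⁻¹' {b}) = 2⁻¹ ^ k
    ∧ shEntropy (μ[| (fun ω => fun i : Fin k => S (i.1 + 1) ω) ⁻¹' {b}])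
        (fun ω => (rankVar S (k + 1) ω, rankVar S (k + 2) ω))
      = (if b = fun _ => 0 then 2 - 3 / 4 * Real.logb 2 3 else 2)
    ∧ shEntropy (μ[| (fun ω => fun i : Fin k => S (i.1 + 1) ω) ⁻¹' {b}])
        (fun ω => (S (k + 1) ω, S (k + 2) ω)) = 2 := by
  classical
  set β : ℕ → Fin 2 := fun n => if h : n - 1 < k then b ⟨n - 1, h⟩ else 0 with hβ
  set E : Set Ω := (fun ω => fun i : Fin k => S (i.1 + 1) ω) ⁻¹' {b} with hEdef0
  have hβb : ∀ i : Fin k, β (i.1 + 1) = b i := by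
    intro i
    simp only [hβ, Nat.add_sub_cancel]
    rw [dif_pos i.2]
  have hmemE : ∀ ω, ω ∈ E ↔ ∀ n, 1 ≤ n → n ≤ k → S n ω = β n := by
    intro ω
    constructor
    · intro h n h1 h2
      have hlt : n - 1 < k := by omega
      have h' : (fun i : Fin k => S (i.1 + 1) ω) = b := h
      have := congrFun h' ⟨n - 1, hlt⟩
      simp only at this
      rw [show n - 1 + 1 = n by omega] at this
      rw [this, hβ]
      simp only
      rw [dif_pos hlt]
    · intro h
      have : (fun i : Fin k => S (i.1 + 1) ω) = b := by
        funext i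
        rw [h (i.1 + 1) (by omega) (by omega), hβb]
      exact this
  have hEeq : E = ⋂ n ∈ Finset.Icc 1 k, S n ⁻¹' {β n} := by
    ext ω
    simp only [Set.mem_iInter, Set.mem_preimage, Set.mem_singleton_iff, Finset.mem_Icc]
    rw [hmemE]
    exact ⟨fun h n hn => h n hn.1 hn.2, fun h n h1 h2 => h n ⟨h1, h2⟩⟩
  have hmeasE : MeasurableSet E := by
    rw [hEeq]
    exact Finset.measurableSet_biInter _ fun n _ => (hmeas n) (measurableSet_singleton _)
  have hE : μ E = 2⁻¹ ^ k := by
    rw [hEeq, aux_prod hindep hfair, Nat.card_Icc, Nat.add_sub_cancel]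
  have hEne : μ E ≠ 0 := by rw [hE]; exact pow_ne_zero _ (by simp)
  have hpair : ∀ a a' : Fin 2,
      μ[|E] ((fun ω => (S (k + 1) ω, S (k + 2) ω)) ⁻¹' {(a, a')}) = 2⁻¹ ^ 2 := by
    intro a a'
    have hset : E ∩ ((fun ω => (S (k + 1) ω, S (k + 2) ω)) ⁻¹' {(a, a')})
        = ⋂ n ∈ Finset.Icc 1 (k + 2),
            S n ⁻¹' {(fun n => if n = k + 1 then a else if n = k + 2 then a' else β n) n} := by
      ext ω
      simp only [Set.mem_inter_iff, Set.mem_preimage, Set.mem_singleton_iff, Prod.mk.injEq,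
        Set.mem_iInter, Finset.mem_Icc, hmemE]
      constructor
      · rintro ⟨h1, h2, h3⟩ n ⟨hn1, hn2⟩
        by_cases e1 : n = k + 1
        · subst e1; simpa using h2
        · by_cases e2 : n = k + 2
          · subst e2
            simp only [if_neg e1, if_pos rfl]
            exact h3
          · simp only [if_neg e1, if_neg e2]
            exact h1 n hn1 (by omega)
      · intro h
        refine ⟨fun n h1 h2 => ?_, ?_, ?_⟩
        · have := h n ⟨h1, by omega⟩
          simpa [show n ≠ k + 1 by omega, show n ≠ k + 2 by omega] using this
        · simpa using h (k + 1) ⟨by omega, by omega⟩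
        · have := h (k + 2) ⟨by omega, by omega⟩
          simpa [show k + 2 ≠ k + 1 by omega] using this
    rw [cond_apply hmeasE, hset, aux_prod hindep hfair, hE, Nat.card_Icc,
      show k + 2 + 1 - 1 = k + (2 : ℕ) by omega, pow_add, ← mul_assoc,
      ENNReal.inv_mul_cancel (pow_ne_zero _ (by simp)) (ENNReal.pow_ne_top (by simp)), one_mul]
  have hTset : ∀ s : Finset (Fin 2 × Fin 2),
      μ[|E] ((fun ω => (S (k + 1) ω, S (k + 2) ω)) ⁻¹' ↑s) = s.card * 2⁻¹ ^ 2 := by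
    intro s
    have hdecomp : ((fun ω => (S (k + 1) ω, S (k + 2) ω)) ⁻¹' ↑s)
        = ⋃ t ∈ s, ((fun ω => (S (k + 1) ω, S (k + 2) ω)) ⁻¹' {t}) := by
      ext ω; simp
    rw [hdecomp, measure_biUnion_finset
      (fun t _ t' _ hne => (Set.disjoint_singleton.mpr hne).preimage _)
      (fun t _ => ((hmeas (k + 1)).prodMk (hmeas (k + 2))) (measurableSet_singleton _))]
    rw [Finset.sum_congr rfl (fun t _ => by rw [show ({t} : Set (Fin 2 × Fin 2)) = {(t.1, t.2)} by simp,
      hpair t.1 t.2]), Finset.sum_const, nsmul_eq_mul]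
  -- rank identities
  set m : ℕ := ((Finset.Icc 1 k).filter fun n => β n = 0).card with hm
  have hmk : m ≤ k := by
    have := Finset.card_filter_le (Finset.Icc 1 k) (fun n => β n = 0)
    rwa [Nat.card_Icc, Nat.add_sub_cancel] at this
  have hb0 : (b = fun _ => 0) ↔ m = k := by
    constructor
    · intro h
      have hfe : (Finset.Icc 1 k).filter (fun n => β n = 0) = Finset.Icc 1 k := by
        rw [Finset.filter_eq_self]
        intro n hn
        rw [Finset.mem_Icc] at hn
        have hlt : n - 1 < k := by omega
        simp only [hβ]
        rw [dif_pos hlt, h]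
      rw [hm, hfe, Nat.card_Icc, Nat.add_sub_cancel]
    · intro h
      funext i
      have hfull : (Finset.Icc 1 k).filter (fun n => β n = 0) = Finset.Icc 1 k :=
        Finset.eq_of_subset_of_card_le (Finset.filter_subset _ _)
          (by rw [Nat.card_Icc, Nat.add_sub_cancel]; omega)
      have h2 := Finset.filter_eq_self.mp hfull (i.1 + 1)
        (Finset.mem_Icc.mpr ⟨by omega, by omega⟩)
      rw [hβb] at h2
      exact h2
  set g : Fin 2 × Fin 2 → ℕ × ℕ := fun t =>
    ((if t.1 = 1 then k + 1 else m + 1),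
     (if t.2 = 1 then k + 2 else if t.1 = 1 then m + 1 else m + 2)) with hg
  have hrank : ∀ ω ∈ E,
      (rankVar S (k + 1) ω, rankVar S (k + 2) ω) = g (S (k + 1) ω, S (k + 2) ω) := by
    intro ω hω
    have hS : ∀ n, 1 ≤ n → n ≤ k → S n ω = β n := (hmemE ω).mp hω
    have h1 : Finset.Icc 1 (k + 1) = insert (k + 1) (Finset.Icc 1 k) :=
      (Finset.insert_Icc_right_eq_Icc_add_one (by omega)).symm
    have h2 : Finset.Icc 1 (k + 2) = insert (k + 2) (insert (k + 1) (Finset.Icc 1 k)) := by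
      rw [show k + 2 = k + 1 + 1 from rfl, ← Finset.insert_Icc_right_eq_Icc_add_one (by omega), h1]
    have hne1 : (k + 1) ∉ Finset.Icc 1 k := by simp [Finset.mem_Icc]
    have hne2 : (k + 2) ∉ insert (k + 1) (Finset.Icc 1 k) := by
      simp [Finset.mem_Icc]
    have hle1 : ∀ v : Fin 2, v ≤ 1 := by decide
    have hfilt1 : ∀ c : ℕ, ((Finset.Icc 1 k).filter fun i => S i ω ≤ S c ω)
        = if S c ω = 1 then Finset.Icc 1 k
          else (Finset.Icc 1 k).filter fun n => β n = 0 := by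
      intro c
      rcases (by decide : ∀ v : Fin 2, v = 0 ∨ v = 1) (S c ω) with hc | hc
      · rw [hc, if_neg (by decide)]
        apply Finset.filter_congr
        intro n hn
        rw [Finset.mem_Icc] at hn
        rw [hS n hn.1 hn.2]
        simp [Fin.le_zero_iff]
      · rw [hc, if_pos rfl, Finset.filter_true_of_mem (fun n _ => hle1 _)]
    have hrank1 : rankVar S (k + 1) ω = if S (k + 1) ω = 1 then k + 1 else m + 1 := by
      unfold rankVar
      rw [h1, Finset.filter_insert, if_pos le_rfl,
        Finset.card_insert_of_notMem (fun hmem => hne1 (Finset.filter_subset _ _ hmem)),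
        hfilt1 (k + 1)]
      split
      · rw [Nat.card_Icc, Nat.add_sub_cancel]
      · rfl
    have hfne1 : (k + 1) ∉ (Finset.Icc 1 k).filter (fun n => β n = 0) :=
      fun h => hne1 (Finset.filter_subset _ _ h)
    have hfne2 : (k + 2) ∉ insert (k + 1) ((Finset.Icc 1 k).filter (fun n => β n = 0)) := by
      intro h
      rcases Finset.mem_insert.mp h with h | h
      · omega
      · have := Finset.mem_Icc.mp (Finset.filter_subset _ _ h); omega
    have hfne2' : (k + 2) ∉ (Finset.Icc 1 k).filter (fun n => β n = 0) := by
      intro h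
      have := Finset.mem_Icc.mp (Finset.filter_subset _ _ h); omega
    have hrank2 : rankVar S (k + 2) ω
        = if S (k + 2) ω = 1 then k + 2
          else if S (k + 1) ω = 1 then m + 1 else m + 2 := by
      unfold rankVar
      rw [h2, Finset.filter_insert, if_pos le_rfl, Finset.filter_insert, hfilt1 (k + 2)]
      rcases (by decide : ∀ v : Fin 2, v = 0 ∨ v = 1) (S (k + 2) ω) with hc2 | hc2 <;>
        rcases (by decide : ∀ v : Fin 2, v = 0 ∨ v = 1) (S (k + 1) ω) with hc1 | hc1
      · simp only [if_neg (show ¬ S (k + 2) ω = 1 by rw [hc2]; decide),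
          if_pos (show S (k + 1) ω ≤ S (k + 2) ω by rw [hc1, hc2]),
          if_neg (show ¬ S (k + 1) ω = 1 by rw [hc1]; decide)]
        rw [Finset.card_insert_of_notMem hfne2, Finset.card_insert_of_notMem hfne1]
      · simp only [if_neg (show ¬ S (k + 2) ω = 1 by rw [hc2]; decide),
          if_neg (show ¬ S (k + 1) ω ≤ S (k + 2) ω by rw [hc1, hc2]; decide),
          if_pos hc1]
        rw [Finset.card_insert_of_notMem hfne2']
      · simp only [if_pos hc2, if_pos (show S (k + 1) ω ≤ S (k + 2) ω by rw [hc2]; exact hle1 _)]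
        rw [Finset.card_insert_of_notMem hne2, Finset.card_insert_of_notMem hne1,
          Nat.card_Icc]
        omega
      · simp only [if_pos hc2, if_pos (show S (k + 1) ω ≤ S (k + 2) ω by rw [hc2]; exact hle1 _)]
        rw [Finset.card_insert_of_notMem hne2, Finset.card_insert_of_notMem hne1,
          Nat.card_Icc]
        omega
    rw [hrank1, hrank2, hg]
  -- conditional law of the rank pair
  have hRp : ∀ (p : ℕ × ℕ) (s : Finset (Fin 2 × Fin 2)), (∀ t, t ∈ s ↔ g t = p) →
      μ[|E] ((fun ω => (rankVar S (k + 1) ω, rankVar S (k + 2) ω)) ⁻¹' {p})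
        = s.card * 2⁻¹ ^ 2 := by
    intro p s hs
    have hseteq : E ∩ ((fun ω => (rankVar S (k + 1) ω, rankVar S (k + 2) ω)) ⁻¹' {p})
        = E ∩ ((fun ω => (S (k + 1) ω, S (k + 2) ω)) ⁻¹' ↑s) := by
      ext ω
      simp only [Set.mem_inter_iff, Set.mem_preimage, Set.mem_singleton_iff,
        Finset.mem_coe, hs]
      constructor
      · rintro ⟨hω, hp⟩
        exact ⟨hω, by rw [← hrank ω hω]; exact hp⟩
      · rintro ⟨hω, hp⟩
        exact ⟨hω, by rw [hrank ω hω]; exact hp⟩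
    rw [cond_apply hmeasE, hseteq, ← cond_apply hmeasE, hTset]
  have hq : ((1:ℝ≥0∞) * 2⁻¹ ^ 2).toReal = 1/4 := by norm_num
  have hlogq : Real.logb 2 (1/4) = -2 := by
    rw [show (1/4:ℝ) = ((2:ℝ) ^ (2:ℕ))⁻¹ by norm_num, Real.logb_inv, Real.logb_pow,
      Real.logb_self_eq_one (by norm_num)]
    norm_num
  have hSent : shEntropy (μ[|E]) (fun ω => (S (k + 1) ω, S (k + 2) ω)) = 2 := by
    rw [shEntropy, tsum_fintype]
    have hterm : ∀ t : Fin 2 × Fin 2,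
        (μ[|E] ((fun ω => (S (k + 1) ω, S (k + 2) ω)) ⁻¹' {t})).toReal
          * Real.logb 2 (μ[|E] ((fun ω => (S (k + 1) ω, S (k + 2) ω)) ⁻¹' {t})).toReal
        = (1/4) * (-2) := by
      intro t
      have hp' := hpair t.1 t.2
      rw [Prod.mk.eta] at hp'
      rw [hp', show ((2:ℝ≥0∞)⁻¹ ^ 2).toReal = 1/4 by norm_num, hlogq]
    rw [Finset.sum_congr rfl (fun t _ => hterm t), Finset.sum_const]
    simp [Finset.card_univ]
  refine ⟨hE, ?_, hSent⟩
  by_cases hbz : b = fun _ => 0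
  · -- all-zero prefix : m = k
    have hmke : m = k := hb0.mp hbz
    rw [if_pos hbz, shEntropy]
    have hsupp : ∀ p : ℕ × ℕ, p ∉ ({(k+1, k+2), (k+1, k+1)} : Finset (ℕ × ℕ)) →
        (μ[|E] ((fun ω => (rankVar S (k + 1) ω, rankVar S (k + 2) ω)) ⁻¹' {p})).toReal
          * Real.logb 2 (μ[|E] ((fun ω => (rankVar S (k + 1) ω, rankVar S (k + 2) ω)) ⁻¹' {p})).toReal
        = 0 := by
      intro p hp
      have h0 : ∀ t, t ∈ (∅ : Finset (Fin 2 × Fin 2)) ↔ g t = p := by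
        intro t
        simp only [Finset.notMem_empty, false_iff]
        intro hgt
        apply hp
        rw [Finset.mem_insert, Finset.mem_singleton, ← hgt]
        exact g_zero_mem k m hmke t
      rw [hRp p ∅ h0]
      simp
    rw [tsum_eq_sum hsupp]
    have hAiff : ∀ t, t ∈ ({(0,0), (0,1), (1,1)} : Finset (Fin 2 × Fin 2)) ↔ g t = (k+1, k+2) := by
      rintro ⟨a, a'⟩
      rw [Finset.mem_insert, Finset.mem_insert, Finset.mem_singleton]
      exact (g_zero_A k m hmke a a').symm
    have hBiff : ∀ t, t ∈ ({(1,0)} : Finset (Fin 2 × Fin 2)) ↔ g t = (k+1, k+1) := by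
      rintro ⟨a, a'⟩
      rw [Finset.mem_singleton]
      exact (g_zero_B k m hmke a a').symm
    rw [Finset.sum_insert (by simp), Finset.sum_singleton,
      hRp (k+1, k+2) {(0,0), (0,1), (1,1)} hAiff, hRp (k+1, k+1) {(1,0)} hBiff]
    have h34 : (((({(0,0), (0,1), (1,1)} : Finset (Fin 2 × Fin 2)).card : ℝ≥0∞)) * 2⁻¹ ^ 2).toReal
        = 3/4 := by
      rw [show ({(0,0), (0,1), (1,1)} : Finset (Fin 2 × Fin 2)).card = 3 by decide]
      norm_num
    have h14 : (((({(1,0)} : Finset (Fin 2 × Fin 2)).card : ℝ≥0∞)) * 2⁻¹ ^ 2).toReal = 1/4 := by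
      rw [Finset.card_singleton]
      norm_num
    rw [h34, h14, hlogq,
      show Real.logb 2 (3/4) = Real.logb 2 3 - 2 by
        rw [Real.logb_div (by norm_num) (by norm_num),
          show (4:ℝ) = (2:ℝ) ^ (2:ℕ) by norm_num, Real.logb_pow,
          Real.logb_self_eq_one (by norm_num)]
        ring]
    ring
  · -- not all-zero : m < k, the four outcomes are distinct
    have hmlt : m < k := lt_of_le_of_ne hmk (fun h => hbz (hb0.mpr h))
    have hginj : Function.Injective g := g_inj k m hmlt
    rw [if_neg hbz, shEntropy]
    have hsupp : ∀ p : ℕ × ℕ, p ∉ Finset.image g Finset.univ →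
        (μ[|E] ((fun ω => (rankVar S (k + 1) ω, rankVar S (k + 2) ω)) ⁻¹' {p})).toReal
          * Real.logb 2 (μ[|E] ((fun ω => (rankVar S (k + 1) ω, rankVar S (k + 2) ω)) ⁻¹' {p})).toReal
        = 0 := by
      intro p hp
      have h0 : ∀ t, t ∈ (∅ : Finset (Fin 2 × Fin 2)) ↔ g t = p := by
        intro t
        simp only [Finset.notMem_empty, false_iff]
        intro hgt
        exact hp (Finset.mem_image.mpr ⟨t, Finset.mem_univ t, hgt⟩)
      rw [hRp p ∅ h0]
      simp
    rw [tsum_eq_sum hsupp, Finset.sum_image (fun t _ t' _ h => hginj h)]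
    have hterm : ∀ t : Fin 2 × Fin 2,
        (μ[|E] ((fun ω => (rankVar S (k + 1) ω, rankVar S (k + 2) ω)) ⁻¹' {g t})).toReal
          * Real.logb 2 (μ[|E] ((fun ω => (rankVar S (k + 1) ω, rankVar S (k + 2) ω)) ⁻¹' {g t})).toReal
        = (1/4) * (-2) := by
      intro t
      have hone : ∀ t', t' ∈ ({t} : Finset (Fin 2 × Fin 2)) ↔ g t' = g t := by
        intro t'
        rw [Finset.mem_singleton]
        exact ⟨fun h => by rw [h], fun h => hginj h⟩
      rw [hRp (g t) {t} hone, Finset.card_singleton, Nat.cast_one, hq, hlogq]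
    rw [Finset.sum_congr rfl (fun t _ => hterm t), Finset.sum_const]
    simp [Finset.card_univ]

end Aux

/-- For i.i.d. fair Bernoulli variables `S_n ∈ {0,1}`,
`H(R_{k+1}, R_{k+2} | S_1,…,S_k) = 2 (1 − (3/2^{k+3}) log₂ 3)` for every `k`,
and hence `H(R_{k+1}, R_{k+2} | S_1^k) → 2 = H(S_{k+1}, S_{k+2} | S_1^k)` as `k → ∞`. -/
theorem bernoulli_rank_condEntropy {Ω : Type*} [MeasurableSpace Ω]
    (μ : Measure Ω) [IsProbabilityMeasure μ]
    (S : ℕ → Ω → Fin 2) (hmeas : ∀ n, Measurable (S n))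
    (hindep : iIndepFun S μ)
    (hfair : ∀ n, μ (S n ⁻¹' {0}) = 1/2 ∧ μ (S n ⁻¹' {1}) = 1/2) :
    (∀ k : ℕ,
        condShEntropy μ (fun ω => (rankVar S (k + 1) ω, rankVar S (k + 2) ω))
            (fun ω => fun i : Fin k => S (i.1 + 1) ω)
          = 2 * (1 - 3 / 2 ^ (k + 3) * Real.logb 2 3))
      ∧ Filter.Tendsto
          (fun k : ℕ =>
            condShEntropy μ (fun ω => (rankVar S (k + 1) ω, rankVar S (k + 2) ω))
              (fun ω => fun i : Fin k => S (i.1 + 1) ω))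
          Filter.atTop (nhds 2)
      ∧ ∀ k : ℕ,
          condShEntropy μ (fun ω => (S (k + 1) ω, S (k + 2) ω))
            (fun ω => fun i : Fin k => S (i.1 + 1) ω) = 2 := by
  classical
  have htoReal : ∀ k : ℕ, ((2:ℝ≥0∞)⁻¹ ^ k).toReal = ((2:ℝ)⁻¹) ^ k := by intro k; simp
  have hcard : ∀ k : ℕ, (Finset.univ : Finset (Fin k → Fin 2)).card = 2 ^ k := by
    intro k
    simp [Finset.card_univ]
  have part1 : ∀ k : ℕ,
      condShEntropy μ (fun ω => (rankVar S (k + 1) ω, rankVar S (k + 2) ω))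
          (fun ω => fun i : Fin k => S (i.1 + 1) ω)
        = 2 * (1 - 3 / 2 ^ (k + 3) * Real.logb 2 3) := by
    intro k
    rw [condShEntropy, tsum_fintype]
    have hterm : ∀ b : Fin k → Fin 2,
        (μ ((fun ω => fun i : Fin k => S (i.1 + 1) ω) ⁻¹' {b})).toReal
          * shEntropy (μ[|(fun ω => fun i : Fin k => S (i.1 + 1) ω) ⁻¹' {b}])
              (fun ω => (rankVar S (k + 1) ω, rankVar S (k + 2) ω))
        = ((2:ℝ)⁻¹) ^ k * 2
          - (if b = (fun _ => 0) then ((2:ℝ)⁻¹) ^ k * (3 / 4 * Real.logb 2 3) else 0) := by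
      intro b
      obtain ⟨h1, h2, _⟩ := core hmeas hindep hfair k b
      rw [h1, h2, htoReal]
      split <;> ring
    rw [Finset.sum_congr rfl (fun b _ => hterm b), Finset.sum_sub_distrib,
      Finset.sum_ite_eq' Finset.univ (fun _ => (0 : Fin 2)) _, if_pos (Finset.mem_univ _),
      Finset.sum_const, hcard, nsmul_eq_mul]
    have h2k : ((2:ℝ)) ^ k ≠ 0 := by positivity
    have h2k3 : ((2:ℝ)) ^ (k + 3) = 2 ^ k * 8 := by rw [pow_add]; norm_num
    rw [h2k3]
    push_cast
    field_simp
    have h12 : ((1:ℝ)/2)^k * 2^k = 1 := by rw [div_pow, one_pow, div_mul_cancel₀ _ h2k]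
    linear_combination (-24 * Real.logb 2 3 + 64 * (2:ℝ)^k) * h12
  refine ⟨part1, ?_, ?_⟩
  · -- limit
    have heq : ∀ k : ℕ, 2 * (1 - 3 / 2 ^ (k + 3) * Real.logb 2 3)
        = 2 - (3 * Real.logb 2 3 / 4) * ((2:ℝ)⁻¹) ^ k := by
      intro k
      have h2k : ((2:ℝ)) ^ k ≠ 0 := by positivity
      have h2k3 : ((2:ℝ)) ^ (k + 3) = 2 ^ k * 8 := by rw [pow_add]; norm_num
      rw [h2k3, inv_pow]
      field_simp
      ring
    have h0 : Filter.Tendsto (fun k : ℕ => ((2:ℝ)⁻¹) ^ k) Filter.atTop (nhds 0) :=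
      tendsto_pow_atTop_nhds_zero_of_lt_one (by norm_num) (by norm_num)
    have htend : Filter.Tendsto
        (fun k : ℕ => 2 - (3 * Real.logb 2 3 / 4) * ((2:ℝ)⁻¹) ^ k)
        Filter.atTop (nhds 2) := by
      have := (h0.const_mul (3 * Real.logb 2 3 / 4)).const_sub 2
      simpa using this
    exact htend.congr (fun k => by rw [← heq, ← part1 k])
  · -- H(S_{k+1}, S_{k+2} | S_1^k) = 2
    intro k
    rw [condShEntropy, tsum_fintype]
    have hterm : ∀ b : Fin k → Fin 2,
        (μ ((fun ω => fun i : Fin k => S (i.1 + 1) ω) ⁻¹' {b})).toReal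
          * shEntropy (μ[|(fun ω => fun i : Fin k => S (i.1 + 1) ω) ⁻¹' {b}])
              (fun ω => (S (k + 1) ω, S (k + 2) ω))
        = ((2:ℝ)⁻¹) ^ k * 2 := by
      intro b
      obtain ⟨h1, _, h3⟩ := core hmeas hindep hfair k b
      rw [h1, h3, htoReal]
    rw [Finset.sum_congr rfl (fun b _ => hterm b), Finset.sum_const, hcard, nsmul_eq_mul]
    have h2k : ((2:ℝ)) ^ k ≠ 0 := by positivity
    push_cast
    field_simp
    rw [div_pow, one_pow, mul_one_div_cancel h2k]
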